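/- For a generic arrangement A of n hyperplanes in K^k and C = {i₁ < ⋯ < i_{k+1}} ⊆ {1,…,n}, the hyperplane D_C ⊆ K^n has normal vector α_C given by the Laplace expansion of the (k+1)×(k+1) matrix with first row (e*_{i₁},…,e*_{i_{k+1}}) and remaining rows the coordinates of α_{i₁},…,α_{i_{k+1}}; i.e., α_C = Σ_j (−1)^{j+1} det(α_{i₁},…,α̂_{i_j},…,α_{i_{k+1}}) e*_{i_j}, and D_C = ker α_C. -/
import Mathlib


/-- For a generic arrangement of `n` hyperplanes in `K^k` and a
`(k+1)`-subset `C = {i₁ < ⋯ < i_{k+1}}`, the hyperplane `D_C` is the kernel of the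
linear form `α_C = Σ_j (−1)^{j+1} det(α_{i₁},…,α̂_{i_j},…,α_{i_{k+1}}) e*_{i_j}`
obtained by Laplace expansion along the first row. (With 0-based `j : Fin (k+1)`
the sign `(−1)^{j+1}` of the 1-based expansion becomes `(−1)^j`.) -/
theorem dC_normal_laplace {K : Type*} [Field K] {n k : ℕ}
    (α : Fin n → (Fin k → K))
    (hgen : ∀ S : Finset (Fin n), S.card ≤ k →
      LinearIndependent K (fun i : S => α i))
    (C : Fin (k + 1) → Fin n) (hC : StrictMono C) :
    {t : Fin n → K | ∃ x : Fin k → K,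
        ∀ i ∈ Set.range C, ∑ j, α i j * x j = t i} =
      {t : Fin n → K |
        ∑ j : Fin (k + 1), (-1 : K) ^ (j : ℕ) *
          (Matrix.of fun a b : Fin k => α (C (Fin.succAbove j b)) a).det * t (C j)
          = 0} := by
  -- linear independence of any k of the α (C j)
  have hli : LinearIndependent K (fun p : Fin k => α (C p.castSucc)) := by
    set S : Finset (Fin n) := Finset.univ.image (fun p : Fin k => C p.castSucc) with hS
    have hcard : S.card ≤ k := le_trans Finset.card_image_le (by simp)
    have hli' := hgen S hcard
    have hinj : Function.Injective (fun p : Fin k =>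
        (⟨C p.castSucc, by simp [hS]⟩ : S)) := by
      intro p q h
      have : C p.castSucc = C q.castSucc := congrArg Subtype.val h
      exact Fin.castSucc_injective k (hC.injective this)
    exact hli'.comp _ hinj
  -- the auxiliary square matrix has nonzero determinant
  have hA : (Matrix.of fun p q : Fin k => α (C p.castSucc) q).det ≠ 0 := by
    rw [← Matrix.det_transpose]
    intro hdet
    obtain ⟨g, hg, hg0⟩ := (Matrix.exists_mulVec_eq_zero_iff).2 hdet
    apply hg
    have := Fintype.linearIndependent_iff.1 hli g ?_
    · funext p; exact this p
    · funext q
      have := congrFun hg0 q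
      simpa [Matrix.mulVec, dotProduct, Finset.sum_apply,
        mul_comm] using this
  ext t
  simp only [Set.mem_setOf_eq]
  set B : Matrix (Fin (k + 1)) (Fin (k + 1)) K :=
    fun j => Fin.cons (t (C j)) (fun a => α (C j) a) with hB
  have hdet : B.det = ∑ j : Fin (k + 1), (-1 : K) ^ (j : ℕ) *
      (Matrix.of fun a b : Fin k => α (C (Fin.succAbove j b)) a).det * t (C j) := by
    rw [Matrix.det_succ_column_zero]
    refine Finset.sum_congr rfl fun j _ => ?_
    have h2 : (B.submatrix j.succAbove Fin.succ) =
        (Matrix.of fun a b : Fin k => α (C (Fin.succAbove j b)) a).transpose := by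
      ext p q; rfl
    rw [h2, Matrix.det_transpose]
    show (-1 : K) ^ (j : ℕ) * t (C j) * _ = _
    ring
  rw [← hdet, ← Matrix.exists_mulVec_eq_zero_iff]
  constructor
  · rintro ⟨x, hx⟩
    refine ⟨Fin.cons (-1) x, ?_, ?_⟩
    · intro h
      have := congrFun h 0
      simp at this
    · funext j
      have hxj := hx (C j) (Set.mem_range_self j)
      simp only [Matrix.mulVec, dotProduct, Pi.zero_apply]
      rw [Fin.sum_univ_succ]
      simp only [hB, Fin.cons_zero, Fin.cons_succ]
      linear_combination hxj
  · rintro ⟨v, hv, hmv⟩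
    have hv0 : v 0 ≠ 0 := by
      intro h0
      apply hv
      have htail : ∀ a : Fin k, v a.succ = 0 := by
        by_contra hne
        push_neg at hne
        have : ∃ w ≠ 0, (Matrix.of fun p q : Fin k => α (C p.castSucc) q).mulVec w = 0 := by
          refine ⟨fun a => v a.succ, fun hw => ?_, ?_⟩
          · obtain ⟨a, ha⟩ := hne; exact ha (congrFun hw a)
          · funext p
            have := congrFun hmv p.castSucc
            simp only [Matrix.mulVec, dotProduct, Pi.zero_apply] at this ⊢
            rw [Fin.sum_univ_succ] at this
            simp only [hB, Fin.cons_zero, Fin.cons_succ, h0, mul_zero, zero_add] at this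
            simpa using this
        exact hA (Matrix.exists_mulVec_eq_zero_iff.1 this)
      funext c
      refine Fin.cases ?_ ?_ c
      · exact h0
      · exact htail
    refine ⟨fun a => -v a.succ * (v 0)⁻¹, fun i hi => ?_⟩
    obtain ⟨j, rfl⟩ := hi
    have := congrFun hmv j
    simp only [Matrix.mulVec, dotProduct, Pi.zero_apply] at this
    rw [Fin.sum_univ_succ] at this
    simp only [hB, Fin.cons_zero, Fin.cons_succ] at this
    have h1 : ∑ a : Fin k, α (C j) a * (-v a.succ * (v 0)⁻¹) =
        (∑ a : Fin k, α (C j) a * v a.succ) * (-(v 0)⁻¹) := by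
      rw [Finset.sum_mul]
      exact Finset.sum_congr rfl fun a _ => by ring
    have h2 : ∑ a : Fin k, α (C j) a * v a.succ = -(t (C j) * v 0) := by
      linear_combination this
    rw [h1, h2, neg_mul_neg, mul_assoc, mul_inv_cancel₀ hv0, mul_one]
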